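/- Let p ≡ 1 (mod 8) be a prime, and write σ = a + bi ∈ ℤ[i] with a² + b² = p and b even. Then the quadratic residue symbol [σ/σ̄] equals the Legendre symbol (2a/p), and this equals 1. -/

import Mathlib

open Classical in
/-- The quadratic residue symbol `[α/π]`: `1` if `α` is a square modulo `π`, `-1` otherwise. -/
noncomputable def qr {R : Type*} [CommRing R] (α π : R) : ℤ :=
  if ∃ τ : R, π ∣ α - τ ^ 2 then 1 else -1

/-- For a prime `p ≡ 1 (mod 8)` written as `p = a² + b²` with `b` even and `σ = a + bi`,
the quadratic residue symbol `[σ/σ̄]` equals the Legendre symbol `(2a/p)`, and both equal `1`. -/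
theorem stmt1 (p : ℕ) (hp : p.Prime) (h8 : p % 8 = 1) (a b : ℤ) (hb : Even b)
    (hnorm : a ^ 2 + b ^ 2 = (p : ℤ)) :
    qr (⟨a, b⟩ : Zsqrtd (-1)) (star (⟨a, b⟩ : Zsqrtd (-1))) = jacobiSym (2 * a) p ∧
      qr (⟨a, b⟩ : Zsqrtd (-1)) (star (⟨a, b⟩ : Zsqrtd (-1))) = 1 := by
  haveI : Fact p.Prime := ⟨hp⟩
  have hp4 : p % 4 = 1 := by omega
  have hpodd : Odd p := by
    rcases Nat.even_or_odd p with h | h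
    · exfalso; rcases h with ⟨k, hk⟩; omega
    · exact h
  -- p does not divide a
  have hpa : ¬ (p : ℤ) ∣ a := by
    intro hdvd
    have hb2 : (p : ℤ) ∣ b ^ 2 := by
      have h1 : (p : ℤ) ∣ a ^ 2 := dvd_pow hdvd two_ne_zero
      have h2 : b ^ 2 = (p : ℤ) - a ^ 2 := by linarith [hnorm]
      rw [h2]
      exact dvd_sub (dvd_refl _) h1
    have hpb : (p : ℤ) ∣ b := (Int.Prime.dvd_pow' (by exact_mod_cast hp) hb2)
    have hsq : (p : ℤ) ^ 2 ∣ (p : ℤ) := by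
      have h3 : (p : ℤ) ^ 2 ∣ a ^ 2 + b ^ 2 :=
        dvd_add (pow_dvd_pow_of_dvd hdvd 2) (pow_dvd_pow_of_dvd hpb 2)
      rwa [hnorm] at h3
    have h1 : (p : ℤ) ∣ 1 := (mul_dvd_mul_iff_left (by exact_mod_cast hp.ne_zero : (p:ℤ) ≠ 0)).mp
      (by simpa [pow_two, mul_one] using hsq)
    have := Int.le_of_dvd one_pos h1
    have := hp.two_le
    omega
  have ha0 : a ≠ 0 := fun h => hpa (h ▸ dvd_zero _)
  -- a and b are coprime
  have hgcd : Int.gcd a b = 1 := by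
    set g := Int.gcd a b with hg
    have hga : (g : ℤ) ∣ a := Int.gcd_dvd_left a b
    have hgb : (g : ℤ) ∣ b := Int.gcd_dvd_right a b
    have hgp : (g : ℤ) ∣ (p : ℤ) := by
      rw [← hnorm]
      exact dvd_add (hga.pow (by norm_num)) (hgb.pow (by norm_num))
    have hgp' : g ∣ p := Int.ofNat_dvd.mp hgp
    rcases (Nat.Prime.eq_one_or_self_of_dvd hp g hgp') with h | h
    · exact h
    · exfalso; exact hpa (h ▸ hga)
  -- a is odd
  have haodd : Odd a := by
    rcases Int.even_or_odd a with h | h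
    · exfalso
      have : Even (a ^ 2 + b ^ 2) :=
        Even.add (Int.even_pow.mpr ⟨h, two_ne_zero⟩) (Int.even_pow.mpr ⟨hb, two_ne_zero⟩)
      rw [hnorm] at this
      rcases hpodd with ⟨k, hk⟩
      rcases this with ⟨m, hm⟩
      omega
    · exact h
  -- Jacobi symbol computation: J(2a | p) = 1
  have hJ2 : jacobiSym 2 p = 1 := by
    rw [jacobiSym.at_two hpodd, ZMod.χ₈_nat_mod_eight, h8]
    decide
  have hJa : jacobiSym a p = 1 := by
    have hnatodd : Odd a.natAbs := Int.natAbs_odd.mpr haodd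
    have hrec : jacobiSym (p : ℤ) a.natAbs = jacobiSym (a.natAbs : ℤ) p :=
      jacobiSym.quadratic_reciprocity_one_mod_four hp4 hnatodd
    have hmod : ((p : ℤ)) % (a.natAbs : ℕ) = (b ^ 2) % (a.natAbs : ℕ) := by
      have hdvd : ((a.natAbs : ℕ) : ℤ) ∣ b ^ 2 - (p : ℤ) := by
        have : b ^ 2 - (p : ℤ) = -(a ^ 2) := by linarith [hnorm]
        rw [this]
        exact dvd_neg.mpr (dvd_pow (Int.natAbs_dvd.mpr (dvd_refl a)) two_ne_zero)
      exact (Int.modEq_iff_dvd.mpr hdvd)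
    have hJpa : jacobiSym (p : ℤ) a.natAbs = 1 := by
      rw [jacobiSym.mod_left' hmod]
      apply jacobiSym.sq_one'
      simpa [Int.gcd, Int.natAbs_abs, Nat.gcd_comm] using hgcd
    have habs : jacobiSym (a.natAbs : ℤ) p = jacobiSym a p := by
      rcases Int.natAbs_eq a with h | h
      · rw [← h]
      · have h2 : jacobiSym a p = jacobiSym (-(a.natAbs : ℤ)) p := by rw [← h]
        rw [h2, jacobiSym.neg _ hpodd, ZMod.χ₄_nat_one_mod_four hp4, one_mul]
    rw [← habs, ← hrec, hJpa]
  have hJ : jacobiSym (2 * a) p = 1 := by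
    rw [jacobiSym.mul_left, hJ2, hJa, one_mul]
  -- 2a is a nonzero square mod p
  have h2a0 : ((2 * a : ℤ) : ZMod p) ≠ 0 := by
    rw [Ne, ZMod.intCast_zmod_eq_zero_iff_dvd]
    intro hdvd
    have := (Int.Prime.dvd_mul' (by exact_mod_cast hp) hdvd)
    rcases this with h | h
    · have := Int.le_of_dvd (by norm_num) h
      have := hp.two_le
      omega
    · exact hpa h
  have hsq : IsSquare ((2 * a : ℤ) : ZMod p) := by
    rw [← legendreSym.eq_one_iff p h2a0]
    rw [jacobiSym.legendreSym.to_jacobiSym]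
    exact hJ
  rcases hsq with ⟨c, hc⟩
  have hpt : (p : ℤ) ∣ 2 * a - ((c.val : ℤ)) ^ 2 := by
    rw [← ZMod.intCast_zmod_eq_zero_iff_dvd]
    push_cast
    rw [ZMod.natCast_val, ZMod.cast_id]
    rw [pow_two, ← hc]; push_cast; ring
  -- the key divisibility in ℤ[i]
  have hkey : ∃ τ : Zsqrtd (-1), star (⟨a, b⟩ : Zsqrtd (-1)) ∣ (⟨a, b⟩ : Zsqrtd (-1)) - τ ^ 2 := by
    refine ⟨(((c.val : ℤ)) : Zsqrtd (-1)), ?_⟩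
    have h1 : (⟨a, b⟩ : Zsqrtd (-1)) - (((c.val : ℤ)) : Zsqrtd (-1)) ^ 2 =
        (-(star (⟨a, b⟩ : Zsqrtd (-1)))) + ((2 * a - ((c.val : ℤ)) ^ 2 : ℤ) : Zsqrtd (-1)) := by
      ext <;> simp [Zsqrtd.re_star, Zsqrtd.im_star] <;> ring
    rw [h1]
    refine dvd_add (dvd_neg.mpr dvd_rfl) ?_
    have hps : star (⟨a, b⟩ : Zsqrtd (-1)) ∣ ((p : ℤ) : Zsqrtd (-1)) := by
      refine ⟨(⟨a, b⟩ : Zsqrtd (-1)), ?_⟩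
      ext <;> simp [Zsqrtd.re_mul, Zsqrtd.im_mul, Zsqrtd.re_star, Zsqrtd.im_star] <;>
        push_cast [← hnorm] <;> ring
    exact hps.trans (map_dvd (Int.castRingHom (Zsqrtd (-1))) hpt)
  have hqr : qr (⟨a, b⟩ : Zsqrtd (-1)) (star (⟨a, b⟩ : Zsqrtd (-1))) = 1 := by
    rw [qr, if_pos hkey]
  exact ⟨by rw [hqr, hJ], hqr⟩
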